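/- Let μ be a positive Borel measure on [0,1). Then μ is a Carleson measure on 𝔻 if and only if μ([t,1)) = O(1-t) as t → 1⁻, if and only if μ[n] = O(1/n). -/

import Mathlib

open MeasureTheory Complex Metric Real

/-- The Carleson box `S(I)` over the arc `I = {e^{iθ} : θ₀ ≤ θ ≤ θ₀ + ℓ}` of the unit
circle: `S(I) = {rζ : 1 - ℓ/(2π) < r < 1, ζ ∈ I}`. -/
def carlesonBox (θ₀ ℓ : ℝ) : Set ℂ :=
  {z : ℂ | 1 - ℓ / (2 * π) < ‖z‖ ∧ ‖z‖ < 1 ∧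
    ∃ θ ∈ Set.Icc θ₀ (θ₀ + ℓ), z = (‖z‖ : ℂ) * Complex.exp (θ * Complex.I)}

/-- A positive measure `ν` on `𝔻` is a Carleson measure: `sup_I ν(S(I))/|I| < ∞`. -/
def IsCarlesonMeasure (ν : Measure ℂ) : Prop :=
  ∃ C : ℝ, ∀ θ₀ ℓ : ℝ, 0 < ℓ → ℓ ≤ 2 * π →
    ν (carlesonBox θ₀ ℓ) ≤ ENNReal.ofReal (C * ℓ)


lemma condB_to_A (μ : Measure ℝ) (hsupp : ∀ᵐ t ∂μ, t ∈ Set.Ico (0:ℝ) 1)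
    (h : ∃ C : ℝ, ∀ t ∈ Set.Ico (0:ℝ) 1, μ (Set.Ico t 1) ≤ ENNReal.ofReal (C * (1-t))) :
    IsCarlesonMeasure (Measure.map (fun t : ℝ => (t:ℂ)) μ) := by
  obtain ⟨C, hC⟩ := h
  refine ⟨max C 0, fun θ₀ ℓ hℓ hℓ2 => ?_⟩
  have hπ := Real.pi_pos
  set s : ℝ := 1 - ℓ / (2 * π) with hs
  have hs0 : 0 ≤ s := by
    have : ℓ / (2 * π) ≤ 1 := by
      rw [div_le_one (by positivity)]; exact hℓ2
    simp only [hs]; linarith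
  have hs1 : s < 1 := by
    have : 0 < ℓ / (2 * π) := by positivity
    simp only [hs]; linarith
  have hU : MeasurableSet {z : ℂ | s < ‖z‖ ∧ ‖z‖ < 1} := by
    apply MeasurableSet.inter
    · exact measurableSet_lt measurable_const measurable_norm
    · exact measurableSet_lt measurable_norm measurable_const
  have hsub : carlesonBox θ₀ ℓ ⊆ {z : ℂ | s < ‖z‖ ∧ ‖z‖ < 1} := fun z hz => ⟨hz.1, hz.2.1⟩
  calc (Measure.map (fun t : ℝ => (t:ℂ)) μ) (carlesonBox θ₀ ℓ)
      ≤ (Measure.map (fun t : ℝ => (t:ℂ)) μ) {z : ℂ | s < ‖z‖ ∧ ‖z‖ < 1} :=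
        measure_mono hsub
    _ = μ ((fun t : ℝ => (t:ℂ)) ⁻¹' {z : ℂ | s < ‖z‖ ∧ ‖z‖ < 1}) :=
        Measure.map_apply Complex.measurable_ofReal hU
    _ ≤ μ (Set.Ico s 1) := by
        apply measure_mono_ae
        filter_upwards [hsupp] with t ht hmem
        have hmem' : s < ‖(t:ℂ)‖ ∧ ‖(t:ℂ)‖ < 1 := hmem
        have hn : ‖(t:ℂ)‖ = t := by
          rw [Complex.norm_real]; exact _root_.abs_of_nonneg ht.1
        rw [hn] at hmem'
        exact ⟨le_of_lt hmem'.1, hmem'.2⟩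
    _ ≤ ENNReal.ofReal (C * (1 - s)) := hC s ⟨hs0, hs1⟩
    _ ≤ ENNReal.ofReal (max C 0 * ℓ) := by
        apply ENNReal.ofReal_le_ofReal
        have h1s : 1 - s = ℓ / (2 * π) := by simp [hs]
        rw [h1s]
        rcases le_or_gt C 0 with hC0 | hC0
        · have : C * (ℓ / (2 * π)) ≤ 0 := mul_nonpos_of_nonpos_of_nonneg hC0 (by positivity)
          have : 0 ≤ max C 0 * ℓ := mul_nonneg (le_max_right _ _) hℓ.le
          linarith
        · have hmax : max C 0 = C := max_eq_left hC0.le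
          rw [hmax]
          have : ℓ / (2 * π) ≤ ℓ := by
            rw [div_le_iff₀ (by positivity)]
            nlinarith [Real.pi_gt_three]
          nlinarith

lemma condA_to_B (μ : Measure ℝ) [IsFiniteMeasure μ]
    (h : IsCarlesonMeasure (Measure.map (fun t : ℝ => (t:ℂ)) μ)) :
    ∃ C : ℝ, ∀ t ∈ Set.Ico (0:ℝ) 1, μ (Set.Ico t 1) ≤ ENNReal.ofReal (C * (1-t)) := by
  obtain ⟨C, hC⟩ := h
  have hπ := Real.pi_pos
  set K : ℝ := max (2 * π * C) 0 with hK
  have hK0 : 0 ≤ K := le_max_right _ _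
  refine ⟨max K (μ Set.univ).toReal, fun t ht => ?_⟩
  rcases eq_or_lt_of_le ht.1 with h0 | h0
  · -- t = 0
    rw [← h0]
    calc μ (Set.Ico (0:ℝ) 1) ≤ μ Set.univ := measure_mono (Set.subset_univ _)
      _ = ENNReal.ofReal (μ Set.univ).toReal := (ENNReal.ofReal_toReal (measure_ne_top μ _)).symm
      _ ≤ ENNReal.ofReal (max K (μ Set.univ).toReal * (1 - 0)) := by
          apply ENNReal.ofReal_le_ofReal
          simp [le_max_right]
  · -- 0 < t
    -- first: for all ε ∈ (0, t], μ (Ico t 1) ≤ ofReal (2πC(1 - t + ε))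
    have key : ∀ ε : ℝ, 0 < ε → ε ≤ t → (μ (Set.Ico t 1)).toReal ≤ K * (1 - t) + K * ε := by
      intro ε hε hεt
      set t' : ℝ := t - ε with ht'
      have ht'0 : 0 ≤ t' := by simp only [ht']; linarith
      have ht'1 : t' < 1 := by simp only [ht']; linarith [ht.2]
      set ℓ : ℝ := 2 * π * (1 - t') with hℓdef
      have hℓpos : 0 < ℓ := by nlinarith
      have hℓ2 : ℓ ≤ 2 * π := by nlinarith
      have hbox : Set.Ico t 1 ⊆ (fun t : ℝ => (t:ℂ)) ⁻¹' carlesonBox 0 ℓ := by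
        intro s hs
        have hs0 : 0 ≤ s := le_trans ht.1 hs.1
        have hn : ‖(s:ℂ)‖ = s := by rw [Complex.norm_real]; exact _root_.abs_of_nonneg hs0
        refine ⟨?_, ?_, 0, ?_, ?_⟩
        · rw [hn]
          have : ℓ / (2 * π) = 1 - t' := by field_simp [hℓdef]; exact hℓdef
          rw [this]
          have : t' < t := by simp only [ht']; linarith
          linarith [hs.1]
        · rw [hn]; exact hs.2
        · constructor <;> simp [hℓpos.le]
        · rw [hn]; simp
      calc (μ (Set.Ico t 1)).toReal
          ≤ ((Measure.map (fun t : ℝ => (t:ℂ)) μ) (carlesonBox 0 ℓ)).toReal := by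
            apply ENNReal.toReal_mono
            · exact ne_top_of_le_ne_top ENNReal.ofReal_ne_top (hC 0 ℓ hℓpos hℓ2)
            · exact le_trans (measure_mono hbox) (Measure.le_map_apply Complex.measurable_ofReal.aemeasurable _)
        _ ≤ max (C * ℓ) 0 := by
            apply ENNReal.toReal_le_of_le_ofReal (le_max_right _ _)
            exact le_trans (hC 0 ℓ hℓpos hℓ2) (ENNReal.ofReal_le_ofReal (le_max_left _ _))
        _ ≤ K * (1 - t) + K * ε := by
            have hCK : max (C * ℓ) 0 ≤ K * (1 - t') := by
              rcases le_or_gt C 0 with hC0 | hC0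
              · have h1 : C * ℓ ≤ 0 := mul_nonpos_of_nonpos_of_nonneg hC0 hℓpos.le
                have h2 : max (C * ℓ) 0 = 0 := max_eq_right h1
                rw [h2]; nlinarith
              · have h1 : (0:ℝ) ≤ C * ℓ := by positivity
                have h2 : max (C * ℓ) 0 = C * ℓ := max_eq_left h1
                have h3 : K = 2 * π * C := max_eq_left (by positivity)
                rw [h2, h3, hℓdef]; ring_nf; rfl
            have : K * (1 - t') = K * (1 - t) + K * ε := by simp only [ht']; ring
            linarith
    have hreal : (μ (Set.Ico t 1)).toReal ≤ K * (1 - t) := by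
      apply le_of_forall_pos_le_add
      intro δ hδ
      rcases le_or_gt K 0 with hK0' | hKpos
      · have := key t h0 le_rfl
        nlinarith
      · set ε := min t (δ / K) with hε
        have hε0 : 0 < ε := lt_min h0 (by positivity)
        have := key ε hε0 (min_le_left _ _)
        have : K * ε ≤ δ := by
          have : ε ≤ δ / K := min_le_right _ _
          rw [← le_div_iff₀' hKpos]
          exact this
        linarith [key ε hε0 (min_le_left _ _)]
    calc μ (Set.Ico t 1) = ENNReal.ofReal (μ (Set.Ico t 1)).toReal :=
          (ENNReal.ofReal_toReal (measure_ne_top μ _)).symm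
      _ ≤ ENNReal.ofReal (max K (μ Set.univ).toReal * (1 - t)) := by
          apply ENNReal.ofReal_le_ofReal
          have h1t : (0:ℝ) ≤ 1 - t := by linarith [ht.2]
          nlinarith [le_max_left K (μ Set.univ).toReal, hreal]

lemma condB_to_C (μ : Measure ℝ) [IsFiniteMeasure μ]
    (hsupp : ∀ᵐ t ∂μ, t ∈ Set.Ico (0:ℝ) 1)
    (h : ∃ C : ℝ, ∀ t ∈ Set.Ico (0:ℝ) 1, μ (Set.Ico t 1) ≤ ENNReal.ofReal (C * (1-t))) :
    ∃ C : ℝ, ∀ n : ℕ, (n : ℝ) * ∫ t, t ^ n ∂μ ≤ C := by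
  obtain ⟨C, hC⟩ := h
  set K : ℝ := max C 0 with hKdef
  have hK0 : 0 ≤ K := le_max_right _ _
  have hK : ∀ t ∈ Set.Ico (0:ℝ) 1, μ (Set.Ico t 1) ≤ ENNReal.ofReal (K * (1-t)) := by
    intro t ht
    refine le_trans (hC t ht) (ENNReal.ofReal_le_ofReal ?_)
    have : (0:ℝ) ≤ 1 - t := by linarith [ht.2]
    nlinarith [le_max_left C 0]
  refine ⟨K, fun n => ?_⟩
  rcases Nat.eq_zero_or_pos n with hn | hn
  · simp [hn, hK0]
  have hnR : (1:ℝ) ≤ (n:ℝ) := by exact_mod_cast hn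
  set r : ℝ := ((n:ℝ))⁻¹ with hrdef
  have hr0 : 0 < r := by positivity
  have hr1 : r ≤ 1 := by
    rw [hrdef]
    rw [inv_le_one_iff₀]; right; exact hnR
  have f_nn : 0 ≤ᵐ[μ] fun t : ℝ => t ^ n := by
    filter_upwards [hsupp] with t ht; exact pow_nonneg ht.1 n
  have f_mble : AEMeasurable (fun t : ℝ => t ^ n) μ := (measurable_id.pow_const n).aemeasurable
  have lc := MeasureTheory.lintegral_eq_lintegral_meas_lt μ f_nn f_mble
  have hzero : ∀ s : ℝ, 1 ≤ s → μ {a : ℝ | s < a ^ n} = 0 := by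
    intro s hs
    have : μ {a : ℝ | s < a ^ n} ≤ μ (∅ : Set ℝ) := by
      apply measure_mono_ae
      filter_upwards [hsupp] with a ha hmem
      exfalso
      have h1 : a ^ n < 1 := pow_lt_one₀ ha.1 ha.2 hn.ne'
      have : s < a ^ n := hmem
      linarith
    simpa using this
  have hbound : ∀ s ∈ Set.Ioo (0:ℝ) 1,
      μ {a : ℝ | s < a ^ n} ≤ ENNReal.ofReal (K * (1 - s ^ r)) := by
    intro s hs
    have hsr0 : 0 ≤ s ^ r := Real.rpow_nonneg hs.1.le _
    have hsr1 : s ^ r < 1 := Real.rpow_lt_one hs.1.le hs.2 hr0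
    refine le_trans ?_ (hK _ ⟨hsr0, hsr1⟩)
    apply measure_mono_ae
    filter_upwards [hsupp] with a ha hmem
    have hsa : s < a ^ n := hmem
    have key : s ^ r < a := by
      have h1 : s ^ r < (a ^ n : ℝ) ^ r := Real.rpow_lt_rpow hs.1.le hsa hr0
      have h2 : ((a ^ n : ℝ)) ^ r = a := by
        rw [← Real.rpow_natCast a n, ← Real.rpow_mul ha.1, hrdef,
          mul_inv_cancel₀ (by positivity : (n:ℝ) ≠ 0)]
        exact Real.rpow_one a
      rwa [h2] at h1
    exact ⟨key.le, ha.2⟩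
  -- integrability of the majorant on (0,1)
  have hint : IntegrableOn (fun s : ℝ => K * (1 - s ^ r)) (Set.Ioo 0 1) volume := by
    have h1 : IntegrableOn (fun s : ℝ => s ^ r) (Set.Ioo 0 1) volume := by
      have := (intervalIntegral.intervalIntegrable_rpow (μ := volume) (a := 0) (b := 1)
        (r := r) (Or.inl (by linarith))).1
      exact this.mono_set Set.Ioo_subset_Ioc_self
    have h2 : IntegrableOn (fun _ : ℝ => (1:ℝ)) (Set.Ioo 0 1) volume := by
      apply (integrableOn_const_iff (C := (1:ℝ))).mpr
      right; rw [Real.volume_Ioo]; simp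
    exact (h2.sub h1).const_mul K
  have hmono : ∫⁻ s in Set.Ioo (0:ℝ) 1, μ {a : ℝ | s < a ^ n}
      ≤ ∫⁻ s in Set.Ioo (0:ℝ) 1, ENNReal.ofReal (K * (1 - s ^ r)) := by
    apply setLIntegral_mono
    · apply Measurable.ennreal_ofReal; fun_prop
    · exact hbound
  have heq : ∫⁻ s in Set.Ioo (0:ℝ) 1, ENNReal.ofReal (K * (1 - s ^ r))
      = ENNReal.ofReal (∫ s in Set.Ioo (0:ℝ) 1, K * (1 - s ^ r)) := by
    rw [← MeasureTheory.ofReal_integral_eq_lintegral_ofReal hint]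
    apply (ae_restrict_iff' measurableSet_Ioo).mpr
    apply Filter.Eventually.of_forall
    intro s hs
    have : s ^ r < 1 := Real.rpow_lt_one hs.1.le hs.2 hr0
    have : (0:ℝ) ≤ 1 - s ^ r := by linarith
    positivity
  have hval : ∫ s in Set.Ioo (0:ℝ) 1, K * (1 - s ^ r) = K * (1 / ((n:ℝ) + 1)) := by
    rw [← MeasureTheory.integral_Ioc_eq_integral_Ioo,
      ← intervalIntegral.integral_of_le (by norm_num : (0:ℝ) ≤ 1)]
    rw [intervalIntegral.integral_const_mul]
    have hrpow : ∫ s in (0:ℝ)..1, s ^ r = 1 / (r + 1) := by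
      rw [integral_rpow (Or.inl (by linarith))]
      rw [Real.one_rpow, Real.zero_rpow (by linarith)]
      ring
    have hsub : ∫ s in (0:ℝ)..1, (1 - s ^ r) = 1 - 1 / (r + 1) := by
      rw [intervalIntegral.integral_sub intervalIntegrable_const
        (intervalIntegral.intervalIntegrable_rpow (Or.inl (by linarith))), hrpow]
      simp
    rw [hsub]
    have hne : (n:ℝ) ≠ 0 := by positivity
    have : 1 - 1 / (r + 1) = 1 / ((n:ℝ) + 1) := by
      rw [hrdef]
      field_simp
      ring
    rw [this]
  have final : ∫⁻ t, ENNReal.ofReal (t ^ n) ∂μ ≤ ENNReal.ofReal (K * (1 / ((n:ℝ) + 1))) := by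
    rw [lc]
    have hIoi : Set.Ioi (0:ℝ) = Set.Ioo 0 1 ∪ Set.Ici 1 := by
      ext x; simp only [Set.mem_Ioi, Set.mem_union, Set.mem_Ioo, Set.mem_Ici]
      constructor
      · intro hx; rcases lt_or_ge x 1 with h | h
        · exact Or.inl ⟨hx, h⟩
        · exact Or.inr h
      · rintro (⟨h, _⟩ | h) <;> linarith
    rw [hIoi, lintegral_union measurableSet_Ici
      (Set.disjoint_left.mpr (fun x hx hx' => absurd hx' (not_le.mpr hx.2)))]
    have hIci : ∫⁻ s in Set.Ici (1:ℝ), μ {a : ℝ | s < a ^ n} = 0 := by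
      rw [setLIntegral_congr_fun measurableSet_Ici
        (fun s hs => hzero s hs)]
      simp
    rw [hIci, add_zero]
    calc ∫⁻ s in Set.Ioo (0:ℝ) 1, μ {a : ℝ | s < a ^ n}
        ≤ ∫⁻ s in Set.Ioo (0:ℝ) 1, ENNReal.ofReal (K * (1 - s ^ r)) := hmono
      _ = ENNReal.ofReal (K * (1 / ((n:ℝ) + 1))) := by rw [heq, hval]
  have hInt : ∫ t, t ^ n ∂μ ≤ K * (1 / ((n:ℝ) + 1)) := by
    rw [MeasureTheory.integral_eq_lintegral_of_nonneg_ae f_nn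
      (measurable_id.pow_const n).aestronglyMeasurable]
    apply ENNReal.toReal_le_of_le_ofReal (by positivity) final
  have hn1 : (0:ℝ) < (n:ℝ) + 1 := by positivity
  calc (n:ℝ) * ∫ t, t ^ n ∂μ ≤ (n:ℝ) * (K * (1 / ((n:ℝ) + 1))) := by
        apply mul_le_mul_of_nonneg_left hInt (by positivity)
    _ ≤ K := by
        rw [mul_comm, mul_assoc]
        nth_rewrite 2 [← mul_one K]
        apply mul_le_mul_of_nonneg_left _ hK0
        rw [div_mul_eq_mul_div, mul_div_assoc, one_mul, div_le_one hn1]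
        linarith

lemma condC_to_B (μ : Measure ℝ) [IsFiniteMeasure μ]
    (hsupp : ∀ᵐ t ∂μ, t ∈ Set.Ico (0:ℝ) 1)
    (h : ∃ C : ℝ, ∀ n : ℕ, (n : ℝ) * ∫ t, t ^ n ∂μ ≤ C) :
    ∃ C : ℝ, ∀ t ∈ Set.Ico (0:ℝ) 1, μ (Set.Ico t 1) ≤ ENNReal.ofReal (C * (1-t)) := by
  obtain ⟨C, hC⟩ := h
  have hC0 : 0 ≤ C := by simpa using hC 0
  have hint : ∀ n : ℕ, Integrable (fun x : ℝ => x ^ n) μ := by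
    intro n
    apply Integrable.mono' (integrable_const (1:ℝ))
      (by fun_prop : AEStronglyMeasurable (fun x : ℝ => x ^ n) μ)
    filter_upwards [hsupp] with x hx
    rw [Real.norm_eq_abs, _root_.abs_pow]
    exact pow_le_one₀ (abs_nonneg x) (by rw [_root_.abs_of_nonneg hx.1]; exact hx.2.le)
  have f_nn : ∀ n : ℕ, 0 ≤ᵐ[μ] fun x : ℝ => x ^ n := by
    intro n; filter_upwards [hsupp] with x hx; exact pow_nonneg hx.1 n
  set M : ℝ := (μ Set.univ).toReal with hM
  have hM0 : 0 ≤ M := ENNReal.toReal_nonneg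
  refine ⟨8 * C + 4 * M, fun t ht => ?_⟩
  have htoReal : (μ (Set.Ico t 1)).toReal ≤ (8 * C + 4 * M) * (1 - t) := by
    rcases lt_or_ge t (3/4) with h34 | h34
    · -- easy case
      have h1 : (μ (Set.Ico t 1)).toReal ≤ M :=
        ENNReal.toReal_mono (measure_ne_top μ _) (measure_mono (Set.subset_univ _))
      nlinarith [ht.2]
    · -- main case
      set δ : ℝ := 1 - t with hδ
      have hδ0 : 0 < δ := by simp only [hδ]; linarith [ht.2]
      have hδ4 : δ ≤ 1/4 := by simp only [hδ]; linarith
      set x : ℝ := 1 / (2 * δ) with hx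
      have hx2 : 2 ≤ x := by
        rw [hx, le_div_iff₀ (by positivity)]; linarith
      set n : ℕ := ⌊x⌋₊ with hn
      have hn2 : 2 ≤ n := Nat.le_floor (by exact_mod_cast hx2)
      have hnx : (n:ℝ) ≤ x := Nat.floor_le (by linarith)
      have hnx2 : x - 1 < (n:ℝ) := by
        have := Nat.lt_floor_add_one x
        push_cast at this ⊢
        linarith
      have hnpos : (0:ℝ) < (n:ℝ) := by
        have : (2:ℝ) ≤ (n:ℝ) := by exact_mod_cast hn2
        linarith
      have hδx : 2 * δ * x = 1 := by
        rw [hx, mul_one_div, div_self (by positivity : (2:ℝ)*δ ≠ 0)]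
      have hinv : 1 / (n:ℝ) ≤ 4 * δ := by
        rw [div_le_iff₀ hnpos]
        nlinarith [mul_lt_mul_of_pos_left hnx2 hδ0]
      have hnd : (n:ℝ) * δ ≤ 1/2 := by
        nlinarith [mul_le_mul_of_nonneg_right hnx hδ0.le]
      have htn : (1:ℝ)/2 ≤ t ^ n := by
        have hb := one_add_mul_le_pow (by linarith [ht.1] : (-2:ℝ) ≤ t - 1) n
        have hb2 : 1 - (n:ℝ) * δ ≤ t ^ n := by
          have e : 1 + (t - 1) = t := by ring
          calc 1 - (n:ℝ) * δ = 1 + (n:ℝ) * (t - 1) := by simp only [hδ]; ring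
            _ ≤ (1 + (t - 1)) ^ n := hb
            _ = t ^ n := by rw [e]
        nlinarith [hb2, hnd]
      have hT0 : 0 ≤ (μ (Set.Ico t 1)).toReal := ENNReal.toReal_nonneg
      -- t^n * μ(Ico t 1) ≤ ∫ over Ico t 1 ≤ ∫ ≤ C / n
      have hlow : t ^ n * (μ (Set.Ico t 1)).toReal ≤ ∫ s, s ^ n ∂μ := by
        calc t ^ n * (μ (Set.Ico t 1)).toReal
            ≤ ∫ s in Set.Ico t 1, s ^ n ∂μ := by
              rw [mul_comm, ← smul_eq_mul]
              apply MeasureTheory.setIntegral_ge_of_const_le measurableSet_Ico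
                (measure_ne_top μ _)
              · intro s hs
                exact pow_le_pow_left₀ (by linarith : (0:ℝ) ≤ t) hs.1 n
              · exact (hint n).integrableOn
          _ ≤ ∫ s, s ^ n ∂μ := MeasureTheory.setIntegral_le_integral (hint n) (f_nn n)
      have hup : ∫ s, s ^ n ∂μ ≤ C / (n:ℝ) := by
        rw [le_div_iff₀ hnpos]
        calc (∫ s, s ^ n ∂μ) * (n:ℝ) = (n:ℝ) * ∫ s, s ^ n ∂μ := by ring
          _ ≤ C := hC n
      have hCn : C / (n:ℝ) ≤ C * (4 * δ) := by
        rw [div_eq_mul_one_div]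
        exact mul_le_mul_of_nonneg_left hinv hC0
      have : (μ (Set.Ico t 1)).toReal ≤ 8 * C * δ := by nlinarith
      have hfin : (8 * C + 4 * M) * (1 - t) = 8 * C * δ + 4 * M * δ := by
        simp only [hδ]; ring
      nlinarith
  calc μ (Set.Ico t 1) = ENNReal.ofReal (μ (Set.Ico t 1)).toReal :=
        (ENNReal.ofReal_toReal (measure_ne_top μ _)).symm
    _ ≤ ENNReal.ofReal ((8 * C + 4 * M) * (1 - t)) := ENNReal.ofReal_le_ofReal htoReal


/-- For a positive finite Borel measure `μ` on `[0,1)` (viewed on `𝔻`):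
`μ` is a Carleson measure iff `μ([t,1)) = O(1-t)`, iff `μ[n] = O(1/n)`. -/
theorem statement16 (μ : Measure ℝ) [IsFiniteMeasure μ]
    (hsupp : ∀ᵐ t ∂μ, t ∈ Set.Ico (0 : ℝ) 1) :
    (IsCarlesonMeasure (Measure.map (fun t : ℝ => (t : ℂ)) μ)
        ↔ ∃ C : ℝ, ∀ t ∈ Set.Ico (0 : ℝ) 1, μ (Set.Ico t 1) ≤ ENNReal.ofReal (C * (1 - t)))
    ∧ ((∃ C : ℝ, ∀ t ∈ Set.Ico (0 : ℝ) 1, μ (Set.Ico t 1) ≤ ENNReal.ofReal (C * (1 - t)))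
        ↔ ∃ C : ℝ, ∀ n : ℕ, (n : ℝ) * ∫ t, t ^ n ∂μ ≤ C) :=
  ⟨⟨fun hA => condA_to_B μ hA, fun hB => condB_to_A μ hsupp hB⟩,
   ⟨fun hB => condB_to_C μ hsupp hB, fun hC => condC_to_B μ hsupp hC⟩⟩
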